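/- Let k ≥ 1, μ ∈ G_k, w ∈ [k]* with |w| = n ≥ 2, and ℓ ≥ 1. If ℓ < n, then the ℓ-th convolution power (χ_μ − ε)^ℓ evaluated at Y_w equals Σ over all chains Γ in NC(n) with |Γ| = ℓ of Cf_w^(Γ)(R_μ). If ℓ ≥ n, then (χ_μ − ε)^ℓ(Y_w) = 0. -/

import Mathlib

open scoped TensorProduct

noncomputable section

namespace FreeProb

attribute [local instance] Classical.propDecidable

/-! ### Non-crossing partitions of `{1,…,n}`, modelled as setoids on `Fin n` -/

/-- The partition `0_n` of `Fin n` into singletons. -/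
def botS (n : ℕ) : Setoid (Fin n) := ⟨Eq, eq_equivalence⟩

/-- The partition `1_n` of `Fin n` with a single block. -/
def topS (n : ℕ) : Setoid (Fin n) :=
  ⟨fun _ _ => True, ⟨fun _ => trivial, fun _ => trivial, fun _ _ => trivial⟩⟩

/-- A partition is non-crossing if there is no crossing `a < b < c < d` with
`a ∼ c`, `b ∼ d` lying in different blocks. -/
def IsNC {n : ℕ} (s : Setoid (Fin n)) : Prop :=
  ∀ a b c d : Fin n, a < b → b < c → c < d → s.r a c → s.r b d → s.r a b

/-- The lattice `NC(n)` of non-crossing partitions, ordered by reversed refinement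
(the order inherited from the lattice of setoids). -/
abbrev NC (n : ℕ) := {s : Setoid (Fin n) // IsNC s}

instance (n : ℕ) : Finite (Setoid (Fin n)) :=
  Finite.of_injective (fun s => s.r) (by intro s t h; cases s; cases t; cases h; rfl)

noncomputable instance (n : ℕ) : Fintype (Setoid (Fin n)) := Fintype.ofFinite _

noncomputable instance (n : ℕ) : Fintype (NC n) := Fintype.ofFinite _

/-- `0_n` as a non-crossing partition. -/
def ncBot (n : ℕ) : NC n :=
  ⟨botS n, by
    intro a b c d h1 h2 h3 hac _
    have hac' : a = c := hac
    subst hac'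
    exact absurd (h1.trans h2) (lt_irrefl _)⟩

/-- `1_n` as a non-crossing partition. -/
def ncTop (n : ℕ) : NC n := ⟨topS n, fun _ _ _ _ _ _ _ _ _ => trivial⟩

/-- The blocks of a partition, as a finset of finsets. -/
def blocks {n : ℕ} (s : Setoid (Fin n)) : Finset (Finset (Fin n)) :=
  Finset.univ.image fun a => Finset.univ.filter fun b => s.r a b

/-- The next element of the block of `b`, in increasing cyclic order. -/
def nextFun {n : ℕ} (s : Setoid (Fin n)) (b : Fin n) : Fin n :=
  let B : Finset (Fin n) := Finset.univ.filter fun a => s.r b a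
  let A : Finset (Fin n) := B.filter fun a => b < a
  if h : A.Nonempty then A.min' h
  else B.min' ⟨b, Finset.mem_filter.mpr ⟨Finset.mem_univ b, s.iseqv.refl b⟩⟩

/-- The permutation `P_π` associated to a partition `π`: its cycles are the blocks
of `π`, traversed in increasing order.  (The function `nextFun` is indeed bijective,
so the `dite` below always takes its first branch.) -/
def permOf {n : ℕ} (s : Setoid (Fin n)) : Equiv.Perm (Fin n) :=
  if h : Function.Bijective (nextFun s) then Equiv.ofBijective _ h else 1

/-- The partition of `Fin n` into the cycles (orbits) of a permutation. -/
def cycleSetoid {n : ℕ} (σ : Equiv.Perm (Fin n)) : Setoid (Fin n) :=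
  ⟨σ.SameCycle, ⟨fun x => Equiv.Perm.SameCycle.refl σ x, fun h => h.symm, fun h h' => h.trans h'⟩⟩

/-- The Kreweras complement `K(π)`, determined by `P_{K(π)} = P_π⁻¹ * P_{1_n}`. -/
def kreweras {n : ℕ} (s : Setoid (Fin n)) : Setoid (Fin n) :=
  cycleSetoid ((permOf s)⁻¹ * permOf (topS n))

/-- The relative Kreweras complement `K_t(s)`, determined by `P_{K_t(s)} = P_s⁻¹ * P_t`. -/
def relKreweras {n : ℕ} (s t : Setoid (Fin n)) : Setoid (Fin n) :=
  cycleSetoid ((permOf s)⁻¹ * permOf t)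

/-! ### Words, and the Hopf algebra `Y^(k)` -/

/-- Words over the alphabet `{1,…,k}`, encoded as pairs `⟨n, w⟩` with `w : Fin n → Fin k`. -/
abbrev WordIdx (k : ℕ) := Σ n : ℕ, Fin n → Fin k

/-- The commutative polynomial algebra `Y^(k) = ℂ[Y_w : |w| ≥ 2]`. -/
abbrev Yalg (k : ℕ) := MvPolynomial {p : WordIdx k // 2 ≤ p.1} ℂ

/-- The generator `Y_w`, with the convention `Y_w = 1` for `|w| ≤ 1`. -/
def Ygen {k : ℕ} (p : WordIdx k) : Yalg k :=
  if h : 2 ≤ p.1 then MvPolynomial.X ⟨p, h⟩ else 1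

/-- The subword `w|B` of `w` on the positions in `B` (in increasing order). -/
def subword {k n : ℕ} (w : Fin n → Fin k) (B : Finset (Fin n)) : Fin B.card → Fin k :=
  fun i => w (B.orderIsoOfFin rfl i).1

/-- The element `Y_{w;π} = ∏_{B block of π} Y_{w|B}`. -/
def Yprod {k n : ℕ} (w : Fin n → Fin k) (s : Setoid (Fin n)) : Yalg k :=
  ∏ B ∈ blocks s, Ygen ⟨B.card, subword w B⟩

/-- The comultiplication of `Y^(k)`:
`Δ(Y_w) = ∑_{π ∈ NC(n)} Y_{w;π} ⊗ Y_{w;K(π)}`. -/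
def Δk (k : ℕ) : Yalg k →ₐ[ℂ] Yalg k ⊗[ℂ] Yalg k :=
  MvPolynomial.aeval fun q : {p : WordIdx k // 2 ≤ p.1} =>
    ∑ π : NC q.1.1, Yprod q.1.2 π.1 ⊗ₜ[ℂ] Yprod q.1.2 (kreweras π.1)

/-- The counit of `Y^(k)`: `ε(Y_w) = 0` for `|w| ≥ 2`. -/
def εk (k : ℕ) : Yalg k →ₐ[ℂ] ℂ := MvPolynomial.aeval fun _ => 0

/-- The grading of `Y^(k)` in which `Y_w` is homogeneous of degree `|w| - 1`. -/
def Ycomp (k n : ℕ) : Submodule ℂ (Yalg k) :=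
  MvPolynomial.weightedHomogeneousSubmodule ℂ (fun q : {p : WordIdx k // 2 ≤ p.1} => q.1.1 - 1) n

/-! ### Convolution of linear functionals on a bialgebra -/

variable {A : Type} [CommRing A] [Algebra ℂ A]

/-- Convolution `ξη := mult ∘ (ξ ⊗ η) ∘ Δ` of two linear functionals. -/
def convF (D : A →ₐ[ℂ] A ⊗[ℂ] A) (ξ η : A →ₗ[ℂ] ℂ) : A →ₗ[ℂ] ℂ :=
  LinearMap.mul' ℂ ℂ ∘ₗ TensorProduct.map ξ η ∘ₗ D.toLinearMap

/-- Convolution powers `ξ^m`, with `ξ^0 := e` (the counit). -/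
def convPowF (D : A →ₐ[ℂ] A ⊗[ℂ] A) (e ξ : A →ₗ[ℂ] ℂ) : ℕ → (A →ₗ[ℂ] ℂ)
  | 0 => e
  | m + 1 => convF D (convPowF D e ξ m) ξ

/-- `(log η)(x) = -∑_{ℓ ≥ 1} (1/ℓ) (e - η)^ℓ (x)`, the logarithm of a functional `η`
with respect to convolution (`e` is the counit).  On each `x` the sum has only finitely
many nonzero terms, so the `tsum` below is the honest value. -/
def logFunF (D : A →ₐ[ℂ] A ⊗[ℂ] A) (e η : A →ₗ[ℂ] ℂ) (x : A) : ℂ :=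
  -∑' ℓ : ℕ, (1 / ((ℓ : ℂ) + 1)) * convPowF D e (e - η) (ℓ + 1) x

/-! ### Distributions, R-transforms, free multiplicative convolution -/

/-- A distribution (or a family of coefficients of a power series in `k` non-commuting
indeterminates), encoded by its values on all words. -/
abbrev Dist (k : ℕ) := WordIdx k → ℂ

/-- `μ ∈ G_k`: `μ(1) = 1` and `μ(X_i) = 1` for all `i`. -/
def InG {k : ℕ} (μ : Dist k) : Prop :=
  (∀ w : Fin 0 → Fin k, μ ⟨0, w⟩ = 1) ∧ (∀ w : Fin 1 → Fin k, μ ⟨1, w⟩ = 1)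

/-- `Cf_{w;π}(f) = ∏_{B block of π} Cf_{w|B}(f)`, for a coefficient family `α`. -/
def cfPart {k n : ℕ} (α : Dist k) (w : Fin n → Fin k) (s : Setoid (Fin n)) : ℂ :=
  ∏ B ∈ blocks s, α ⟨B.card, subword w B⟩

/-- `α` is (the coefficient family of) the R-transform of `μ`:
the moment–cumulant relations hold. -/
def IsRTransform {k : ℕ} (μ α : Dist k) : Prop :=
  (∀ w : Fin 0 → Fin k, α ⟨0, w⟩ = 0) ∧
  ∀ (n : ℕ) (w : Fin n → Fin k), 1 ≤ n → μ ⟨n, w⟩ = ∑ π : NC n, cfPart α w π.1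

/-- `γ` is the R-transform of the free multiplicative convolution of distributions
with R-transforms `α` and `β`:
`Cf_w(R_{μ⊠ν}) = ∑_{π ∈ NC(n)} Cf_{w;π}(R_μ) Cf_{w;K(π)}(R_ν)`. -/
def IsBoxtimes {k : ℕ} (α β γ : Dist k) : Prop :=
  ∀ (n : ℕ) (w : Fin n → Fin k), 1 ≤ n →
    γ ⟨n, w⟩ = ∑ π : NC n, cfPart α w π.1 * cfPart β w (kreweras π.1)

/-- The unit `μ_o` of `(G_k, ⊠)`: all moments equal to `1`. -/
def distUnit (k : ℕ) : Dist k := fun _ => 1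

/-- The character `χ_μ` of `Y^(k)` associated to a distribution with R-transform `α`:
`χ_μ(Y_w) = Cf_w(R_μ)`. -/
def charOf {k : ℕ} (α : Dist k) : Yalg k →ₐ[ℂ] ℂ :=
  MvPolynomial.aeval fun q => α q.1

/-- The generalized coefficient `Cf_w^(Γ)(f) = ∏_{j=1}^{ℓ} Cf_{w;K_{π_j}(π_{j-1})}(f)`
attached to a (multi-)chain `Γ = (π_0,…,π_{m+1})` in `NC(n)`. -/
def cfChain {k n : ℕ} (α : Dist k) (w : Fin n → Fin k) (m : ℕ)
    (c : Fin (m + 2) → Setoid (Fin n)) : ℂ :=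
  ∏ j : Fin (m + 1), cfPart α w (relKreweras (c j.castSucc) (c j.succ))

/-- The `i`-th marginal coefficients: the free cumulants of the `i`-th marginal `μ_i`
are `Cf_{(i,…,i)}(R_μ)`. -/
def margFam {k : ℕ} (α : Dist k) (i : Fin k) : Dist 1 := fun q => α ⟨q.1, fun _ => i⟩


/-! ### Iterated comultiplication -/

/-- The iterated tensor powers `Y^(k) ⊗ ⋯ ⊗ Y^(k)` (`m+1` factors), as objects of
`ModuleCat ℂ` so that the recursion carries its module structure. -/
def YpowM (k : ℕ) : ℕ → ModuleCat ℂ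
  | 0 => ModuleCat.of ℂ (Yalg k)
  | m + 1 => ModuleCat.of ℂ (Yalg k ⊗[ℂ] YpowM k m)

/-- The iterated comultiplication: `Δiter k m = Δ^{m+1}` in the notation of the paper
(`Δiter k 0 = id`, `Δiter k (m+1) = (id ⊗ Δ^{m+1}) ∘ Δ`). -/
def Δiter (k : ℕ) : ∀ m : ℕ, Yalg k →ₗ[ℂ] YpowM k m
  | 0 => LinearMap.id
  | m + 1 => TensorProduct.map LinearMap.id (Δiter k m) ∘ₗ (Δk k).toLinearMap

/-- The pure tensor `Y_{w;K_{π_1}(π_0)} ⊗ ⋯ ⊗ Y_{w;K_{π_{m+1}}(π_m)}` attached to a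
multi-chain `(π_0, …, π_{m+1})`. -/
def chainTensor {k n : ℕ} (w : Fin n → Fin k) :
    ∀ m : ℕ, (Fin (m + 2) → Setoid (Fin n)) → YpowM k m
  | 0, c => Yprod w (relKreweras (c 0) (c 1))
  | m + 1, c => Yprod w (relKreweras (c 0) (c 1)) ⊗ₜ[ℂ] chainTensor w m (fun i => c i.succ)


/-! ### One-variable power series tools -/

/-- The R-transform of a one-variable distribution, as a power series. -/
def Rser (α : Dist 1) : PowerSeries ℂ :=
  PowerSeries.mk fun m => if m = 0 then 0 else α ⟨m, fun _ => 0⟩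

/-- Composition `f ∘ g` of formal power series (the honest composition whenever
`g` has vanishing constant term). -/
def psComp (f g : PowerSeries ℂ) : PowerSeries ℂ :=
  PowerSeries.mk fun m =>
    ∑ j ∈ Finset.range (m + 1), PowerSeries.coeff (R := ℂ) j f * PowerSeries.coeff (R := ℂ) m (g ^ j)

/-- `S` is the S-transform of the distribution with R-transform `α`:
`S(z) = (1/z)·R^{⟨-1⟩}(z)`, i.e. `z·S(z)` is the compositional inverse of `R`. -/
def SChar (α : Dist 1) (S : PowerSeries ℂ) : Prop :=
  PowerSeries.constantCoeff (R := ℂ) S = 1 ∧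
  psComp (Rser α) (PowerSeries.X * S) = PowerSeries.X ∧
  psComp (PowerSeries.X * S) (Rser α) = PowerSeries.X

/-- The formal logarithm `log f = -∑_{ℓ≥1} (1/ℓ)(1-f)^ℓ = ∑_{ℓ≥1} ((-1)^{ℓ+1}/ℓ)(f-1)^ℓ`
of a power series (the honest logarithm whenever `f` has constant term 1). -/
def psLog {B : Type} [CommRing B] [Algebra ℂ B] (f : PowerSeries B) : PowerSeries B :=
  PowerSeries.mk fun m =>
    ∑ ℓ ∈ Finset.range (m + 1), ((-1 : ℂ) ^ (ℓ + 1) / ℓ) • PowerSeries.coeff (R := B) m ((f - 1) ^ ℓ)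

/-- The coefficient-wise LS-transform of a one-variable distribution, as a power series. -/
def LSseries (α : Dist 1) : PowerSeries ℂ :=
  PowerSeries.mk fun n =>
    if 2 ≤ n then
      logFunF (Δk 1) (εk 1).toLinearMap (charOf α).toLinearMap (Ygen ⟨n, fun _ => 0⟩)
    else 0

/-! ### The Hopf algebra `Sym` of symmetric functions -/

/-- `Sym`, realized as the free commutative algebra on the complete homogeneous
symmetric functions `h_1, h_2, …`. -/
abbrev SymA := MvPolynomial {m : ℕ // 1 ≤ m} ℂ

/-- The complete homogeneous symmetric function `h_m` (with `h_0 = 1`). -/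
def Hgen (m : ℕ) : SymA := if h : 1 ≤ m then MvPolynomial.X ⟨m, h⟩ else 1

/-- The comultiplication of `Sym`: `Δ(h_n) = ∑_{i=0}^n h_i ⊗ h_{n-i}`. -/
def ΔSym : SymA →ₐ[ℂ] SymA ⊗[ℂ] SymA :=
  MvPolynomial.aeval fun q : {m : ℕ // 1 ≤ m} =>
    ∑ i ∈ Finset.range (q.1 + 1), Hgen i ⊗ₜ[ℂ] Hgen (q.1 - i)

/-- The counit of `Sym`. -/
def εSym : SymA →ₐ[ℂ] ℂ := MvPolynomial.aeval fun _ => 0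

/-- The generating series `h(z) = 1 + ∑ (-1)^n h_n z^n`. -/
def hSymSeries : PowerSeries SymA :=
  PowerSeries.mk fun m => if m = 0 then 1 else (-1 : SymA) ^ m * Hgen m

/-- The generating series `e(z) = 1 + ∑ e_n z^n = 1/h(z)`. -/
def eSymSeries : PowerSeries SymA := PowerSeries.invOfUnit hSymSeries 1

/-- The elementary symmetric function `e_m`, defined through `e(z) = 1/h(z)`. -/
def eSym (m : ℕ) : SymA := PowerSeries.coeff (R := SymA) m eSymSeries

/-- The power sum symmetric function `p_m`, defined through
`log e(z) = ∑_{m≥1} ((-1)^{m+1}/m) p_m z^m`. -/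
def pSym (m : ℕ) : SymA :=
  ((-1 : ℂ) ^ (m + 1) * m) • PowerSeries.coeff (R := SymA) m (psLog eSymSeries)

/-- The grading of `Sym` (`h_n` homogeneous of degree `n`). -/
def SymComp (n : ℕ) : Submodule ℂ SymA :=
  MvPolynomial.weightedHomogeneousSubmodule ℂ (fun q : {m : ℕ // 1 ≤ m} => q.1) n

/-- The symmetric function `y_n = ∑_{π ∈ NC(n-1)} ∏_{B block of π} e_{|B|}`. -/
def ySym (n : ℕ) : SymA := ∑ π : NC (n - 1), ∏ B ∈ blocks π.1, eSym B.card

/-- The homomorphism `Φ : Y^(1) → Sym`, `Φ(Y_n) = y_n`. -/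
def Phi : Yalg 1 →ₐ[ℂ] SymA := MvPolynomial.aeval fun q => ySym q.1.1

/-- The character `θ_μ` of `Sym` attached to a distribution with S-transform `S`:
`θ_μ(h_n) = (-1)^n β_n` where `S(z) = 1 + ∑ β_n z^n`. -/
def thetaOf (S : PowerSeries ℂ) : SymA →ₐ[ℂ] ℂ :=
  MvPolynomial.aeval fun q : {m : ℕ // 1 ≤ m} =>
    (-1 : ℂ) ^ q.1 * PowerSeries.coeff (R := ℂ) q.1 S

/-- Infinitesimal characters of `Sym`. -/
def IsInfCharSym (ξ : SymA →ₗ[ℂ] ℂ) : Prop :=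
  ∀ u v : SymA, ξ (u * v) = ξ u * εSym v + εSym u * ξ v

section Lemmas

variable {n : ℕ}

/-- The block of `x`. -/
def blockOf (s : Setoid (Fin n)) (x : Fin n) : Finset (Fin n) :=
  Finset.univ.filter fun a => s.r x a

lemma mem_blockOf {s : Setoid (Fin n)} {x y : Fin n} : y ∈ blockOf s x ↔ s.r x y := by
  simp [blockOf]

lemma self_mem_blockOf (s : Setoid (Fin n)) (x : Fin n) : x ∈ blockOf s x :=
  mem_blockOf.mpr (s.refl' x)

lemma blockOf_mem_blocks (s : Setoid (Fin n)) (x : Fin n) : blockOf s x ∈ blocks s :=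
  Finset.mem_image.mpr ⟨x, Finset.mem_univ x, rfl⟩

lemma mem_blocks {s : Setoid (Fin n)} {B : Finset (Fin n)} :
    B ∈ blocks s ↔ ∃ x, B = blockOf s x := by
  constructor
  · intro h
    rcases Finset.mem_image.mp h with ⟨a, _, rfl⟩
    exact ⟨a, rfl⟩
  · rintro ⟨x, rfl⟩; exact blockOf_mem_blocks s x

lemma blockOf_eq_of_rel {s : Setoid (Fin n)} {x y : Fin n} (h : s.r x y) :
    blockOf s x = blockOf s y := by
  ext z
  simp only [mem_blockOf]
  exact ⟨fun hz => s.trans' (s.symm' h) hz, fun hz => s.trans' h hz⟩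

lemma block_eq_blockOf {s : Setoid (Fin n)} {B : Finset (Fin n)} (hB : B ∈ blocks s)
    {x : Fin n} (hx : x ∈ B) : B = blockOf s x := by
  rcases mem_blocks.mp hB with ⟨a, rfl⟩
  exact blockOf_eq_of_rel (mem_blockOf.mp hx)

lemma blocks_nonempty {s : Setoid (Fin n)} {B : Finset (Fin n)} (hB : B ∈ blocks s) :
    B.Nonempty := by
  rcases mem_blocks.mp hB with ⟨a, rfl⟩
  exact ⟨a, self_mem_blockOf s a⟩

lemma block_card_pos {s : Setoid (Fin n)} {B : Finset (Fin n)} (hB : B ∈ blocks s) :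
    1 ≤ B.card := Finset.card_pos.mpr (blocks_nonempty hB)

lemma block_unique {s : Setoid (Fin n)} {B B' : Finset (Fin n)} (hB : B ∈ blocks s)
    (hB' : B' ∈ blocks s) {x : Fin n} (hx : x ∈ B) (hx' : x ∈ B') : B = B' :=
  (block_eq_blockOf hB hx).trans (block_eq_blockOf hB' hx').symm

lemma rel_of_mem_block {s : Setoid (Fin n)} {B : Finset (Fin n)} (hB : B ∈ blocks s)
    {x y : Fin n} (hx : x ∈ B) (hy : y ∈ B) : s.r x y := by
  have h := block_eq_blockOf hB hx
  subst h; exact mem_blockOf.mp hy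

lemma mem_block_of_rel {s : Setoid (Fin n)} {B : Finset (Fin n)} (hB : B ∈ blocks s)
    {x y : Fin n} (hx : x ∈ B) (hr : s.r x y) : y ∈ B := by
  rw [block_eq_blockOf hB hx]; exact mem_blockOf.mpr hr

/-! ### nextFun -/

lemma nextFun_def (s : Setoid (Fin n)) (b : Fin n) :
    nextFun s b =
      if h : ((Finset.univ.filter fun a => s.r b a).filter fun a => b < a).Nonempty then
        ((Finset.univ.filter fun a => s.r b a).filter fun a => b < a).min' h
      else (Finset.univ.filter fun a => s.r b a).min'
        ⟨b, Finset.mem_filter.mpr ⟨Finset.mem_univ b, s.iseqv.refl b⟩⟩ := rfl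

lemma nextFun_rel (s : Setoid (Fin n)) (b : Fin n) : s.r b (nextFun s b) := by
  rw [nextFun_def]
  split
  · next h =>
      have h2 := Finset.min'_mem _ h
      simp only [Finset.mem_filter] at h2
      exact h2.1.2
  · next h =>
      have h2 := Finset.min'_mem (Finset.univ.filter fun a => s.r b a)
        ⟨b, Finset.mem_filter.mpr ⟨Finset.mem_univ b, s.iseqv.refl b⟩⟩
      simp only [Finset.mem_filter] at h2
      exact h2.2

lemma nextFun_gt {s : Setoid (Fin n)} {b a0 : Fin n} (h : s.r b a0) (hlt : b < a0) :
    b < nextFun s b ∧ ∀ a, s.r b a → b < a → nextFun s b ≤ a := by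
  have hA : ((Finset.univ.filter fun a => s.r b a).filter fun a => b < a).Nonempty :=
    ⟨a0, Finset.mem_filter.mpr ⟨Finset.mem_filter.mpr ⟨Finset.mem_univ _, h⟩, hlt⟩⟩
  rw [nextFun_def, dif_pos hA]
  constructor
  · exact (Finset.mem_filter.mp (Finset.min'_mem _ hA)).2
  · intro a ha hba
    exact Finset.min'_le _ _
      (Finset.mem_filter.mpr ⟨Finset.mem_filter.mpr ⟨Finset.mem_univ _, ha⟩, hba⟩)

lemma nextFun_max {s : Setoid (Fin n)} {b : Fin n} (h : ∀ a, s.r b a → ¬ b < a) :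
    ∀ a, s.r b a → nextFun s b ≤ a := by
  have hA : ¬ ((Finset.univ.filter fun a => s.r b a).filter fun a => b < a).Nonempty := by
    rintro ⟨a, ha⟩
    simp only [Finset.mem_filter, Finset.mem_univ, true_and] at ha
    exact h a ha.1 ha.2
  rw [nextFun_def, dif_neg hA]
  intro a ha
  exact Finset.min'_le _ _ (Finset.mem_filter.mpr ⟨Finset.mem_univ _, ha⟩)

lemma nextFun_bijective (s : Setoid (Fin n)) : Function.Bijective (nextFun s) := by
  rw [Fintype.bijective_iff_injective_and_card]
  refine ⟨?_, rfl⟩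
  intro b b' hbb'
  by_contra hne
  have hrel : s.r b b' := s.trans' (nextFun_rel s b) (hbb' ▸ s.symm' (nextFun_rel s b'))
  have key : ∀ x y : Fin n, s.r x y → x ≠ y →
      (∃ a, s.r y a ∧ y < a) → nextFun s x ≠ nextFun s y := by
    intro x y hxy hxyne ⟨a0, ha0, hy0⟩ heq
    by_cases hAx : ∃ a, s.r x a ∧ x < a
    · rcases hAx with ⟨a1, ha1, hx1⟩
      rcases lt_or_gt_of_ne hxyne with hlt | hlt
      · have h1 : nextFun s x ≤ y := (nextFun_gt ha1 hx1).2 y hxy hlt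
        have h2 : y < nextFun s y := (nextFun_gt ha0 hy0).1
        rw [heq] at h1; exact absurd (lt_of_lt_of_le h2 h1) (lt_irrefl _)
      · have h1 : nextFun s y ≤ x ∧ x < nextFun s x := by
          exact ⟨(nextFun_gt ha0 hy0).2 x (s.symm' hxy) hlt, (nextFun_gt ha1 hx1).1⟩
        rw [heq] at h1
        exact absurd (lt_of_le_of_lt h1.1 h1.2) (lt_irrefl _)
    · push_neg at hAx
      have h1 : nextFun s x ≤ y := nextFun_max (fun a ha => not_lt.mpr (hAx a ha)) y hxy
      have h2 : y < nextFun s y := (nextFun_gt ha0 hy0).1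
      rw [heq] at h1; exact absurd (lt_of_lt_of_le h2 h1) (lt_irrefl _)
  by_cases hAy : ∃ a, s.r b' a ∧ b' < a
  · exact key b b' hrel hne hAy hbb'
  · by_cases hAx : ∃ a, s.r b a ∧ b < a
    · exact key b' b (s.symm' hrel) (Ne.symm hne) hAx hbb'.symm
    · push_neg at hAx hAy
      rcases lt_or_gt_of_ne hne with hlt | hlt
      · exact absurd hlt (not_lt.mpr (hAx b' hrel))
      · exact absurd hlt (not_lt.mpr (hAy b (s.symm' hrel)))

lemma permOf_apply (s : Setoid (Fin n)) (x : Fin n) : permOf s x = nextFun s x := by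
  rw [permOf, dif_pos (nextFun_bijective s)]; rfl

end Lemmas

section Glue

variable {n : ℕ}

/-- The increasing enumeration of `B`. -/
def embB (B : Finset (Fin n)) (i : Fin B.card) : Fin n := B.orderEmbOfFin rfl i

lemma embB_mem (B : Finset (Fin n)) (i : Fin B.card) : embB B i ∈ B :=
  Finset.orderEmbOfFin_mem B rfl i

lemma embB_strictMono (B : Finset (Fin n)) : StrictMono (embB B) :=
  (B.orderEmbOfFin rfl).strictMono

lemma embB_lt_iff {B : Finset (Fin n)} {i j : Fin B.card} : embB B i < embB B j ↔ i < j :=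
  (B.orderEmbOfFin rfl).lt_iff_lt

lemma embB_inj {B : Finset (Fin n)} : Function.Injective (embB B) :=
  (embB_strictMono B).injective

/-- The index of `x` in the increasing enumeration of `B`. -/
def idxOf (B : Finset (Fin n)) (x : Fin n) (hx : x ∈ B) : Fin B.card :=
  (B.orderIsoOfFin rfl).symm ⟨x, hx⟩

lemma embB_idxOf {B : Finset (Fin n)} {x : Fin n} (hx : x ∈ B) :
    embB B (idxOf B x hx) = x := by
  have h := (B.orderIsoOfFin rfl).apply_symm_apply ⟨x, hx⟩
  have h2 : (↑(B.orderIsoOfFin rfl (idxOf B x hx)) : Fin n) = x := by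
    rw [idxOf]; exact congrArg Subtype.val h
  exact h2

lemma idxOf_embB {B : Finset (Fin n)} (i : Fin B.card) (h : embB B i ∈ B) :
    idxOf B (embB B i) h = i :=
  embB_inj (embB_idxOf h)

lemma subword_eq {k : ℕ} (w : Fin n → Fin k) (B : Finset (Fin n)) (i : Fin B.card) :
    subword w B i = w (embB B i) := rfl

lemma idxOf_lt {B : Finset (Fin n)} {x y : Fin n} (hx : x ∈ B) (hy : y ∈ B) (h : x < y) :
    idxOf B x hx < idxOf B y hy := by
  rw [← embB_lt_iff, embB_idxOf, embB_idxOf]; exact h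

/-- Glue a family of partitions of the blocks of `t` into a partition refining `t`. -/
def glue (t : Setoid (Fin n)) (g : ∀ B : Finset (Fin n), Setoid (Fin B.card)) :
    Setoid (Fin n) where
  r x y := t.r x y ∧ ∀ (B : Finset (Fin n)) (hB : B ∈ blocks t) (hx : x ∈ B) (hy : y ∈ B),
    (g B).r (idxOf B x hx) (idxOf B y hy)
  iseqv := by
    refine ⟨fun x => ⟨t.refl' x, fun B hB hx hy => (g B).refl' _⟩, ?_, ?_⟩
    · rintro x y ⟨h1, h2⟩
      exact ⟨t.symm' h1, fun B hB hy hx => (g B).symm' (h2 B hB hx hy)⟩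
    · rintro x y z ⟨h1, h2⟩ ⟨h1', h2'⟩
      refine ⟨t.trans' h1 h1', fun B hB hx hz => ?_⟩
      have hy : y ∈ B := mem_block_of_rel hB hx h1
      exact (g B).trans' (h2 B hB hx hy) (h2' B hB hy hz)

lemma glue_r_iff {t : Setoid (Fin n)} {g} {x y : Fin n} :
    (glue t g).r x y ↔ t.r x y ∧ ∀ (B : Finset (Fin n)) (hB : B ∈ blocks t)
      (hx : x ∈ B) (hy : y ∈ B), (g B).r (idxOf B x hx) (idxOf B y hy) := Iff.rfl

lemma glue_r_emb {t : Setoid (Fin n)} {g} {B : Finset (Fin n)} (hB : B ∈ blocks t)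
    (i j : Fin B.card) :
    (glue t g).r (embB B i) (embB B j) ↔ (g B).r i j := by
  constructor
  · rintro ⟨h1, h2⟩
    have := h2 B hB (embB_mem B i) (embB_mem B j)
    rwa [idxOf_embB, idxOf_embB] at this
  · intro h
    refine ⟨rel_of_mem_block hB (embB_mem B i) (embB_mem B j), ?_⟩
    intro B' hB' hx hy
    obtain rfl : B' = B := block_unique hB' hB hx (embB_mem B i)
    rwa [idxOf_embB, idxOf_embB]

lemma glue_le {t : Setoid (Fin n)} {g} : glue t g ≤ t := fun _ _ h => h.1

lemma glue_congr {t : Setoid (Fin n)} {g g'} (h : ∀ B ∈ blocks t, g B = g' B) :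
    glue t g = glue t g' := by
  apply Setoid.ext
  intro x y
  rw [glue_r_iff, glue_r_iff]
  constructor <;> rintro ⟨h1, h2⟩ <;> refine ⟨h1, fun B hB hx hy => ?_⟩
  · rw [← h B hB]; exact h2 B hB hx hy
  · rw [h B hB]; exact h2 B hB hx hy

lemma glue_top (t : Setoid (Fin n)) : glue t (fun B => topS B.card) = t := by
  apply Setoid.ext
  intro x y
  rw [glue_r_iff]
  exact ⟨fun h => h.1, fun h => ⟨h, fun _ _ _ _ => trivial⟩⟩

lemma blockOf_glue {t : Setoid (Fin n)} {g} {B : Finset (Fin n)} (hB : B ∈ blocks t)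
    (i : Fin B.card) :
    blockOf (glue t g) (embB B i) = (blockOf (g B) i).image (embB B) := by
  ext z
  simp only [mem_blockOf, Finset.mem_image]
  constructor
  · intro h
    have hz : z ∈ B := mem_block_of_rel hB (embB_mem B i) h.1
    refine ⟨idxOf B z hz, ?_, embB_idxOf hz⟩
    exact (glue_r_emb hB i (idxOf B z hz)).mp (by rwa [embB_idxOf])
  · rintro ⟨j, hj, rfl⟩
    exact (glue_r_emb hB i j).mpr hj

/-- Restriction of a partition to (the enumeration of) a finset. -/
def restrictS (s : Setoid (Fin n)) (B : Finset (Fin n)) : Setoid (Fin B.card) where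
  r i j := s.r (embB B i) (embB B j)
  iseqv := ⟨fun i => s.refl' _, fun h => s.symm' h, fun h h' => s.trans' h h'⟩

lemma restrictS_r {s : Setoid (Fin n)} {B : Finset (Fin n)} {i j : Fin B.card} :
    (restrictS s B).r i j ↔ s.r (embB B i) (embB B j) := Iff.rfl

lemma restrict_glue {t : Setoid (Fin n)} {g} {B : Finset (Fin n)} (hB : B ∈ blocks t) :
    restrictS (glue t g) B = g B :=
  Setoid.ext fun i j => glue_r_emb hB i j

lemma glue_restrict {s t : Setoid (Fin n)} (h : s ≤ t) :
    glue t (fun B => restrictS s B) = s := by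
  apply Setoid.ext
  intro x y
  rw [glue_r_iff]
  constructor
  · rintro ⟨h1, h2⟩
    have hx : x ∈ blockOf t x := self_mem_blockOf t x
    have hy : y ∈ blockOf t x := mem_block_of_rel (blockOf_mem_blocks t x) hx h1
    have := h2 _ (blockOf_mem_blocks t x) hx hy
    rwa [restrictS_r, embB_idxOf, embB_idxOf] at this
  · intro hs
    refine ⟨h hs, fun B hB hx hy => ?_⟩
    rw [restrictS_r, embB_idxOf, embB_idxOf]
    exact hs

lemma isNC_restrict {s : Setoid (Fin n)} (hs : IsNC s) (B : Finset (Fin n)) :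
    IsNC (restrictS s B) := by
  intro a b c d h1 h2 h3 hac hbd
  exact hs _ _ _ _ ((embB_strictMono B) h1) ((embB_strictMono B) h2)
    ((embB_strictMono B) h3) hac hbd

lemma isNC_glue {t : Setoid (Fin n)} {g} (ht : IsNC t)
    (hg : ∀ B ∈ blocks t, IsNC (g B)) : IsNC (glue t g) := by
  intro a b c d h1 h2 h3 hac hbd
  have tab : t.r a b := ht a b c d h1 h2 h3 hac.1 hbd.1
  refine ⟨tab, fun B hB ha hb => ?_⟩
  have hc : c ∈ B := mem_block_of_rel hB ha hac.1
  have hd : d ∈ B := mem_block_of_rel hB hb hbd.1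
  exact hg B hB _ _ _ _ (idxOf_lt ha hb h1) (idxOf_lt hb hc h2) (idxOf_lt hc hd h3)
    (hac.2 B hB ha hc) (hbd.2 B hB hb hd)

end Glue

section Perm

variable {n : ℕ}

lemma min'_eq_of_eq {α : Type*} [LinearOrder α] {s t : Finset α} (h : s = t)
    (hs : s.Nonempty) (ht : t.Nonempty) : s.min' hs = t.min' ht := by subst h; rfl

/-- `τ` acts on each block of `t` through the permutations `q B`. -/
def Realizes (t : Setoid (Fin n)) (τ : Equiv.Perm (Fin n))
    (q : ∀ B : Finset (Fin n), Equiv.Perm (Fin B.card)) : Prop :=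
  ∀ B ∈ blocks t, ∀ i : Fin B.card, τ (embB B i) = embB B (q B i)

lemma Realizes.mul {t : Setoid (Fin n)} {τ τ' q q'} (h : Realizes t τ q)
    (h' : Realizes t τ' q') : Realizes t (τ * τ') (fun B => q B * q' B) := by
  intro B hB i
  simp only [Equiv.Perm.mul_apply]
  rw [h' B hB i, h B hB (q' B i)]

lemma Realizes.inv {t : Setoid (Fin n)} {τ q} (h : Realizes t τ q) :
    Realizes t τ⁻¹ (fun B => (q B)⁻¹) := by
  intro B hB i
  apply τ.injective
  rw [show τ (τ⁻¹ (embB B i)) = embB B i from τ.apply_symm_apply _, h B hB ((q B)⁻¹ i)]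
  simp

lemma Realizes.zpow {t : Setoid (Fin n)} {τ q} (h : Realizes t τ q) (z : ℤ) :
    Realizes t (τ ^ z) (fun B => (q B) ^ z) := by
  have hpow : ∀ m : ℕ, Realizes t (τ ^ m) (fun B => (q B) ^ m) := by
    intro m
    induction m with
    | zero => intro B hB i; simp
    | succ m ih =>
        intro B hB i
        have h2 := (ih.mul h) B hB i
        simpa [pow_succ] using h2
  rcases z with m | m
  · simpa using hpow m
  · have h3 := (hpow (m + 1)).inv
    intro B hB i
    have h2 := h3 B hB i
    simpa [zpow_negSucc] using h2

lemma min'_image_embB {B : Finset (Fin n)} {s : Finset (Fin B.card)} {t : Finset (Fin n)}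
    (hts : ∀ z, z ∈ t ↔ ∃ j ∈ s, embB B j = z) (ht : t.Nonempty) (hs : s.Nonempty) :
    t.min' ht = embB B (s.min' hs) := by
  apply le_antisymm
  · exact Finset.min'_le _ _ ((hts _).mpr ⟨s.min' hs, s.min'_mem hs, rfl⟩)
  · obtain ⟨j, hj, hz⟩ := (hts _).mp (t.min'_mem ht)
    rw [← hz]
    exact (embB_strictMono B).monotone (Finset.min'_le _ _ hj)

lemma nextFun_glue {t : Setoid (Fin n)} {g} {B : Finset (Fin n)} (hB : B ∈ blocks t)
    (i : Fin B.card) :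
    nextFun (glue t g) (embB B i) = embB B (nextFun (g B) i) := by
  have hB2 : (Finset.univ.filter fun a => (g B).r i a) = blockOf (g B) i := rfl
  have hblock : ∀ z, (z ∈ Finset.univ.filter fun a => (glue t g).r (embB B i) a) ↔
      ∃ j ∈ blockOf (g B) i, embB B j = z := by
    intro z
    have h1 : (Finset.univ.filter fun a => (glue t g).r (embB B i) a)
        = blockOf (glue t g) (embB B i) := rfl
    rw [h1, blockOf_glue hB i, Finset.mem_image]
  have hA : ∀ z, (z ∈ (Finset.univ.filter fun a => (glue t g).r (embB B i) a).filter
      fun a => embB B i < a) ↔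
      ∃ j ∈ (blockOf (g B) i).filter (fun j => i < j), embB B j = z := by
    intro z
    constructor
    · intro hz
      have hz1 := Finset.mem_filter.mp hz
      obtain ⟨j, hj, rfl⟩ := (hblock z).mp hz1.1
      exact ⟨j, Finset.mem_filter.mpr ⟨hj, embB_lt_iff.mp hz1.2⟩, rfl⟩
    · rintro ⟨j, hj, rfl⟩
      have hj1 := Finset.mem_filter.mp hj
      exact Finset.mem_filter.mpr ⟨(hblock _).mpr ⟨j, hj1.1, rfl⟩, embB_lt_iff.mpr hj1.2⟩
  rw [nextFun_def, nextFun_def]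
  by_cases hne : ((blockOf (g B) i).filter fun j => i < j).Nonempty
  · have hne1 : ((Finset.univ.filter fun a => (glue t g).r (embB B i) a).filter
        fun a => embB B i < a).Nonempty := by
      obtain ⟨j, hj⟩ := hne
      exact ⟨embB B j, (hA _).mpr ⟨j, hj, rfl⟩⟩
    rw [dif_pos hne1, dif_pos (by rw [hB2]; exact hne)]
    exact min'_image_embB hA hne1 hne
  · have hne1 : ¬ ((Finset.univ.filter fun a => (glue t g).r (embB B i) a).filter
        fun a => embB B i < a).Nonempty := by
      rintro ⟨z, hz⟩
      obtain ⟨j, hj, rfl⟩ := (hA z).mp hz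
      exact hne ⟨j, hj⟩
    rw [dif_neg hne1, dif_neg (by rw [hB2]; exact hne)]
    have hne2 : (blockOf (g B) i).Nonempty := ⟨i, self_mem_blockOf _ i⟩
    exact min'_image_embB hblock _ hne2

lemma Realizes.cycle {t : Setoid (Fin n)} {τ q} (h : Realizes t τ q) :
    cycleSetoid τ = glue t (fun B => cycleSetoid (q B)) := by
  apply Setoid.ext
  intro x y
  constructor
  · rintro ⟨z, rfl⟩
    set B0 := blockOf t x with hB0def
    have hB0 : B0 ∈ blocks t := blockOf_mem_blocks t x
    have hx : embB B0 (idxOf B0 x (self_mem_blockOf t x)) = x :=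
      embB_idxOf (self_mem_blockOf t x)
    have hz := (h.zpow z) B0 hB0 (idxOf B0 x (self_mem_blockOf t x))
    rw [hx] at hz
    have h4 := (glue_r_emb (g := fun B => cycleSetoid (q B)) hB0
      (idxOf B0 x (self_mem_blockOf t x)) (((q B0) ^ z) (idxOf B0 x (self_mem_blockOf t x)))).mpr
      ⟨z, rfl⟩
    rw [hx] at h4
    rwa [← hz] at h4
  · rintro ⟨h1, h2⟩
    set B0 := blockOf t x with hB0def
    have hB0 : B0 ∈ blocks t := blockOf_mem_blocks t x
    have hxB : x ∈ B0 := self_mem_blockOf t x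
    have hyB : y ∈ B0 := mem_block_of_rel hB0 hxB h1
    rcases h2 B0 hB0 hxB hyB with ⟨z, hz⟩
    refine ⟨z, ?_⟩
    have h3 := (h.zpow z) B0 hB0 (idxOf B0 x hxB)
    rw [embB_idxOf] at h3
    rw [h3, hz, embB_idxOf]

lemma realizes_permOf_glue (t : Setoid (Fin n)) (g) :
    Realizes t (permOf (glue t g)) (fun B => permOf (g B)) := by
  intro B hB i
  rw [permOf_apply, permOf_apply, nextFun_glue hB]

lemma realizes_permOf_self (t : Setoid (Fin n)) :
    Realizes t (permOf t) (fun B => permOf (topS B.card)) := by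
  have h := realizes_permOf_glue t (fun B => topS B.card)
  rwa [glue_top] at h

lemma permOf_topS_succ {c : ℕ} (b : Fin c) (hb : b.val + 1 < c) :
    permOf (topS c) b = ⟨b.val + 1, hb⟩ := by
  rw [permOf_apply]
  have hblt : b < (⟨b.val + 1, hb⟩ : Fin c) := by
    rw [Fin.lt_def]; exact Nat.lt_succ_self _
  have h := nextFun_gt (s := topS c) (b := b) (a0 := ⟨b.val + 1, hb⟩) trivial hblt
  have h1 := h.1
  have h2 := h.2 ⟨b.val + 1, hb⟩ trivial hblt
  apply le_antisymm h2
  rw [Fin.le_def]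
  exact h1

lemma cycleSetoid_permOf_topS (c : ℕ) : cycleSetoid (permOf (topS c)) = topS c := by
  apply Setoid.ext
  intro x y
  have hc : 0 < c := x.pos
  constructor
  · intro _; exact trivial
  · intro _
    show (permOf (topS c)).SameCycle x y
    have key : ∀ v : ℕ, ∀ hv : v < c, ((permOf (topS c)) ^ v) ⟨0, hc⟩ = ⟨v, hv⟩ := by
      intro v
      induction v with
      | zero => intro hv; simp
      | succ v ih =>
          intro hv
          rw [pow_succ', Equiv.Perm.mul_apply, ih (Nat.lt_of_succ_lt hv)]
          exact permOf_topS_succ _ hv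
    have sc : ∀ z : Fin c, (permOf (topS c)).SameCycle ⟨0, hc⟩ z := by
      intro z
      refine ⟨(z.val : ℤ), ?_⟩
      rw [zpow_natCast]
      exact (key z.val z.2).trans (by simp)
    exact (sc x).symm.trans (sc y)

lemma cycleSetoid_permOf (s : Setoid (Fin n)) : cycleSetoid (permOf s) = s := by
  have h := (realizes_permOf_self s).cycle
  rw [h, glue_congr (fun B _ => cycleSetoid_permOf_topS B.card), glue_top]

lemma permOf_injective {s s' : Setoid (Fin n)} (h : permOf s = permOf s') : s = s' := by
  rw [← cycleSetoid_permOf s, ← cycleSetoid_permOf s', h]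

lemma cycleSetoid_one : cycleSetoid (1 : Equiv.Perm (Fin n)) = botS n := by
  apply Setoid.ext
  intro x y
  constructor
  · rintro ⟨z, hz⟩
    rw [one_zpow] at hz
    exact (hz : x = y)
  · rintro (rfl : x = y)
    exact ⟨0, by simp⟩

lemma relKreweras_self (s : Setoid (Fin n)) : relKreweras s s = botS n := by
  rw [relKreweras, inv_mul_cancel, cycleSetoid_one]

lemma relKreweras_eq_bot_iff {s t : Setoid (Fin n)} : relKreweras s t = botS n ↔ s = t := by
  constructor
  · intro h
    have hperm : (permOf s)⁻¹ * permOf t = 1 := by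
      apply Equiv.ext
      intro x
      have h2 : (relKreweras s t).r x (((permOf s)⁻¹ * permOf t) x) := ⟨1, by simp⟩
      rw [h] at h2
      simp only [Equiv.Perm.one_apply]
      exact (h2 : x = _).symm
    apply permOf_injective
    have h3 := congrArg (fun p => (permOf s) * p) hperm
    simpa [mul_assoc] using h3.symm
  · rintro rfl; exact relKreweras_self s

lemma relKreweras_glue (t : Setoid (Fin n)) (g) :
    relKreweras (glue t g) t = glue t (fun B => kreweras (g B)) := by
  have h : Realizes t ((permOf (glue t g))⁻¹ * permOf t)
      (fun B => (permOf (g B))⁻¹ * permOf (topS B.card)) :=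
    (realizes_permOf_glue t g).inv.mul (realizes_permOf_self t)
  rw [relKreweras, h.cycle]
  rfl

end Perm

section Prod

variable {n k : ℕ}

lemma phi_congr {M : Type*} (φ : ∀ c : ℕ, (Fin c → Fin k) → M) {a b : ℕ} (h : a = b)
    {u : Fin a → Fin k} {v : Fin b → Fin k}
    (huv : ∀ i : Fin b, u (Fin.cast h.symm i) = v i) : φ a u = φ b v := by
  subst h
  have h2 : u = v := funext fun i => huv i
  rw [h2]

lemma fin_cast_strictMono {a b : ℕ} (h : a = b) : StrictMono (Fin.cast h) :=
  fun _ _ hxy => hxy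

lemma emb_comp {B : Finset (Fin n)} (D : Finset (Fin B.card)) (j : Fin D.card) :
    embB (D.image (embB B)) (Fin.cast (Finset.card_image_of_injective D embB_inj).symm j)
      = embB B (embB D j) := by
  have hcard : (D.image (embB B)).card = D.card := Finset.card_image_of_injective D embB_inj
  have h1 : (fun j : Fin D.card => embB B (embB D j))
      = ⇑((D.image (embB B)).orderEmbOfFin hcard) :=
    Finset.orderEmbOfFin_unique hcard
      (fun j => Finset.mem_image_of_mem _ (embB_mem D j))
      ((embB_strictMono B).comp (embB_strictMono D))
  have h2 : (fun j : Fin D.card => embB (D.image (embB B)) (Fin.cast hcard.symm j))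
      = ⇑((D.image (embB B)).orderEmbOfFin hcard) :=
    Finset.orderEmbOfFin_unique hcard (fun j => embB_mem _ _)
      ((embB_strictMono _).comp (fin_cast_strictMono hcard.symm))
  exact (congrFun h2 j).trans (congrFun h1 j).symm

lemma blocks_glue {t : Setoid (Fin n)} {g} :
    blocks (glue t g) = (blocks t).biUnion
      (fun B => (blocks (g B)).image (fun D => D.image (embB B))) := by
  ext C
  simp only [Finset.mem_biUnion, Finset.mem_image]
  constructor
  · intro hC
    obtain ⟨x, rfl⟩ := mem_blocks.mp hC
    have hB : blockOf t x ∈ blocks t := blockOf_mem_blocks t x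
    have hx : x ∈ blockOf t x := self_mem_blockOf t x
    have h2 := blockOf_glue (g := g) hB (idxOf _ x hx)
    rw [embB_idxOf] at h2
    exact ⟨blockOf t x, hB, blockOf (g (blockOf t x)) (idxOf _ x hx),
      blockOf_mem_blocks _ _, h2.symm⟩
  · rintro ⟨B, hB, D, hD, rfl⟩
    obtain ⟨i, rfl⟩ := mem_blocks.mp hD
    rw [← blockOf_glue hB i]
    exact blockOf_mem_blocks _ _

lemma prodOver_glue {M : Type*} [CommMonoid M] (φ : ∀ c : ℕ, (Fin c → Fin k) → M)
    (w : Fin n → Fin k) (t : Setoid (Fin n)) (g) :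
    (∏ C ∈ blocks (glue t g), φ C.card (subword w C))
      = ∏ B ∈ blocks t, ∏ D ∈ blocks (g B), φ D.card (subword (subword w B) D) := by
  rw [blocks_glue, Finset.prod_biUnion]
  · apply Finset.prod_congr rfl
    intro B hB
    rw [Finset.prod_image ?hinj]
    case hinj =>
      intro D1 _ D2 _ h12
      ext j
      constructor
      · intro hj
        have h3 : embB B j ∈ D2.image (embB B) := (show D1.image (embB B) = D2.image (embB B) from h12) ▸ Finset.mem_image_of_mem _ hj
        obtain ⟨j', hj', hj2⟩ := Finset.mem_image.mp h3
        rwa [← embB_inj hj2]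
      · intro hj
        have h3 : embB B j ∈ D1.image (embB B) := (show D1.image (embB B) = D2.image (embB B) from h12) ▸ Finset.mem_image_of_mem _ hj
        obtain ⟨j', hj', hj2⟩ := Finset.mem_image.mp h3
        rwa [← embB_inj hj2]
    apply Finset.prod_congr rfl
    intro D hD
    exact phi_congr φ (Finset.card_image_of_injective D embB_inj)
      (fun i => (congrArg w (emb_comp D i)))
  · intro B1 h1 B2 h2 hne
    rw [Function.onFun, Finset.disjoint_left]
    intro C hC1 hC2
    obtain ⟨D1, hD1, rfl⟩ := Finset.mem_image.mp hC1
    obtain ⟨D2, hD2, hC⟩ := Finset.mem_image.mp hC2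
    obtain ⟨j, hj⟩ := blocks_nonempty hD1
    have hy1 : embB B1 j ∈ B1 := embB_mem _ _
    have hy2 : embB B1 j ∈ B2 := by
      have h3 : embB B1 j ∈ D2.image (embB B2) := by
        rw [hC]; exact Finset.mem_image_of_mem _ hj
      obtain ⟨j', _, hj2⟩ := Finset.mem_image.mp h3
      rw [← hj2]; exact embB_mem _ _
    exact hne (block_unique h1 h2 hy1 hy2)

lemma Yprod_glue (w : Fin n → Fin k) (t : Setoid (Fin n)) (g) :
    Yprod w (glue t g) = ∏ B ∈ blocks t, Yprod (subword w B) (g B) :=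
  prodOver_glue (fun c u => Ygen ⟨c, u⟩) w t g

lemma cfPart_glue (α : Dist k) (w : Fin n → Fin k) (t : Setoid (Fin n)) (g) :
    cfPart α w (glue t g) = ∏ B ∈ blocks t, cfPart α (subword w B) (g B) :=
  prodOver_glue (fun c u => α ⟨c, u⟩) w t g

lemma blockOf_botS (x : Fin n) : blockOf (botS n) x = {x} := by
  ext z
  rw [mem_blockOf, Finset.mem_singleton]
  exact ⟨fun h => (h : x = z).symm, fun h => (h.symm : (botS n).r x z)⟩

lemma block_card_botS {B : Finset (Fin n)} (hB : B ∈ blocks (botS n)) : B.card = 1 := by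
  obtain ⟨x, rfl⟩ := mem_blocks.mp hB
  rw [blockOf_botS]
  exact Finset.card_singleton x

lemma exists_big_block {s : Setoid (Fin n)} (hs : s ≠ botS n) :
    ∃ B ∈ blocks s, 2 ≤ B.card := by
  have h : ∃ x y, s.r x y ∧ x ≠ y := by
    by_contra hc
    push_neg at hc
    apply hs
    apply Setoid.ext
    intro x y
    exact ⟨fun h => hc x y h, fun h => by rw [(h : x = y)]⟩
  obtain ⟨x, y, hxy, hne⟩ := h
  refine ⟨blockOf s x, blockOf_mem_blocks s x, Finset.one_lt_card.mpr
    ⟨x, self_mem_blockOf s x, y, mem_blockOf.mpr hxy, hne⟩⟩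

lemma card_blocks_botS : (blocks (botS n)).card = n := by
  have h : blocks (botS n) = Finset.univ.image (fun a : Fin n => ({a} : Finset (Fin n))) := by
    apply Finset.image_congr
    intro a _
    exact blockOf_botS a
  rw [h, Finset.card_image_of_injective _ (fun a b hab => Finset.singleton_injective hab),
    Finset.card_univ, Fintype.card_fin]

lemma blocks_topS (hn : 0 < n) : blocks (topS n) = {Finset.univ} := by
  have h : blocks (topS n) = Finset.univ.image
      (fun _ : Fin n => (Finset.univ : Finset (Fin n))) := by
    apply Finset.image_congr
    intro a _
    ext z
    simp [topS]
    exact trivial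
  rw [h]
  rw [Finset.image_const ⟨⟨0, hn⟩, Finset.mem_univ _⟩]

lemma card_blocks_topS (hn : 0 < n) : (blocks (topS n)).card = 1 := by
  rw [blocks_topS hn, Finset.card_singleton]

lemma embB_univ (h : (Finset.univ : Finset (Fin n)).card = n) (i : Fin n) :
    embB (Finset.univ : Finset (Fin n)) (Fin.cast h.symm i) = i := by
  have h1 : (fun i : Fin n => embB (Finset.univ : Finset (Fin n)) (Fin.cast h.symm i))
      = ⇑((Finset.univ : Finset (Fin n)).orderEmbOfFin h) :=
    Finset.orderEmbOfFin_unique h (fun j => embB_mem _ _)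
      ((embB_strictMono _).comp (fin_cast_strictMono h.symm))
  have h2 : (fun i : Fin n => i) = ⇑((Finset.univ : Finset (Fin n)).orderEmbOfFin h) :=
    Finset.orderEmbOfFin_unique h (fun j => Finset.mem_univ _) strictMono_id
  exact (congrFun h1 i).trans (congrFun h2 i).symm

lemma prodOver_topS {M : Type*} [CommMonoid M] (φ : ∀ c : ℕ, (Fin c → Fin k) → M)
    (hn : 0 < n) (w : Fin n → Fin k) :
    (∏ C ∈ blocks (topS n), φ C.card (subword w C)) = φ n w := by
  rw [blocks_topS hn, Finset.prod_singleton]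
  have h : (Finset.univ : Finset (Fin n)).card = n := by
    rw [Finset.card_univ, Fintype.card_fin]
  exact phi_congr φ h (fun i => congrArg w (embB_univ h i))

lemma Yprod_topS (hn : 0 < n) (w : Fin n → Fin k) : Yprod w (topS n) = Ygen ⟨n, w⟩ :=
  prodOver_topS (fun c u => Ygen ⟨c, u⟩) hn w

lemma Ygen_one {p : WordIdx k} (h : p.1 ≤ 1) : Ygen p = 1 := dif_neg (by omega)

lemma Yprod_botS (w : Fin n → Fin k) : Yprod w (botS n) = 1 := by
  rw [Yprod]
  apply Finset.prod_eq_one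
  intro B hB
  exact Ygen_one (le_of_eq (block_card_botS hB))

lemma cfPart_botS {α : Dist k} (hα1 : ∀ u : Fin 1 → Fin k, α ⟨1, u⟩ = 1)
    (w : Fin n → Fin k) : cfPart α w (botS n) = 1 := by
  rw [cfPart]
  apply Finset.prod_eq_one
  intro B hB
  rw [phi_congr (fun c u => α ⟨c, u⟩) (block_card_botS hB)
    (v := fun i => subword w B (Fin.cast (block_card_botS hB).symm i)) (fun i => rfl)]
  exact hα1 _

end Prod

section Hopf

variable {n k : ℕ}

lemma setoid_fin_one_eq (s t : Setoid (Fin 1)) : s = t := by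
  apply Setoid.ext
  intro x y
  have h : x = y := Subsingleton.elim x y
  subst h
  exact ⟨fun _ => t.refl' x, fun _ => s.refl' x⟩

lemma Yprod_fin_one (u : Fin 1 → Fin k) (s : Setoid (Fin 1)) : Yprod u s = 1 := by
  rw [Yprod]
  apply Finset.prod_eq_one
  intro B hB
  apply Ygen_one
  calc B.card ≤ (Finset.univ : Finset (Fin 1)).card := Finset.card_le_card (Finset.subset_univ B)
  _ = 1 := by rw [Finset.card_univ, Fintype.card_fin]

lemma Delta_Ygen {c : ℕ} (hc : 1 ≤ c) (u : Fin c → Fin k) :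
    Δk k (Ygen ⟨c, u⟩) = ∑ π : NC c, Yprod u π.1 ⊗ₜ[ℂ] Yprod u (kreweras π.1) := by
  by_cases h2 : 2 ≤ c
  · rw [Ygen, dif_pos h2, Δk, MvPolynomial.aeval_X]
  · have hc1 : c = 1 := by omega
    subst hc1
    rw [Ygen_one le_rfl, map_one]
    haveI : Unique (NC 1) := ⟨⟨ncBot 1⟩, fun π => Subtype.ext (setoid_fin_one_eq _ _)⟩
    rw [Fintype.sum_unique]
    rw [Yprod_fin_one, Yprod_fin_one]
    exact Algebra.TensorProduct.one_def.symm

lemma charOf_Ygen (α : Dist k) {p : WordIdx k} (h2 : 2 ≤ p.1) :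
    charOf α (Ygen p) = α p := by
  rw [Ygen, dif_pos h2, charOf, MvPolynomial.aeval_X]

lemma charOf_Yprod {α : Dist k} (hα1 : ∀ u : Fin 1 → Fin k, α ⟨1, u⟩ = 1)
    (w : Fin n → Fin k) (s : Setoid (Fin n)) : charOf α (Yprod w s) = cfPart α w s := by
  rw [Yprod, map_prod, cfPart]
  apply Finset.prod_congr rfl
  intro B hB
  by_cases h2 : 2 ≤ B.card
  · exact charOf_Ygen α h2
  · have hp := block_card_pos hB
    have h1 : B.card = 1 := by omega
    rw [Ygen_one (le_of_eq h1), map_one]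
    rw [phi_congr (fun c u => α ⟨c, u⟩) h1
      (v := fun i => subword w B (Fin.cast h1.symm i)) (fun i => rfl)]
    exact (hα1 _).symm

lemma eps_Ygen (p : WordIdx k) (h2 : 2 ≤ p.1) : εk k (Ygen p) = 0 := by
  rw [Ygen, dif_pos h2, εk, MvPolynomial.aeval_X]

lemma eps_Yprod (w : Fin n → Fin k) (s : Setoid (Fin n)) :
    εk k (Yprod w s) = if s = botS n then 1 else 0 := by
  split
  · next h => rw [h, Yprod_botS, map_one]
  · next h =>
      obtain ⟨B, hB, h2⟩ := exists_big_block h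
      rw [Yprod, map_prod]
      exact Finset.prod_eq_zero hB (eps_Ygen _ h2)

lemma prod_tmul {ι : Type*} (s : Finset ι) (f g : ι → Yalg k) :
    (∏ i ∈ s, f i ⊗ₜ[ℂ] g i) = (∏ i ∈ s, f i) ⊗ₜ[ℂ] (∏ i ∈ s, g i) := by
  classical
  induction s using Finset.induction_on with
  | empty => simp [Algebra.TensorProduct.one_def]
  | insert _ _ hx ih =>
      rw [Finset.prod_insert hx, Finset.prod_insert hx, Finset.prod_insert hx, ih,
        Algebra.TensorProduct.tmul_mul_tmul]

lemma Delta_Yprod (w : Fin n → Fin k) (t : Setoid (Fin n)) (ht : IsNC t) :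
    Δk k (Yprod w t) = ∑ σ ∈ Finset.univ.filter (fun σ : NC n => σ.1 ≤ t),
      Yprod w σ.1 ⊗ₜ[ℂ] Yprod w (relKreweras σ.1 t) := by
  have step1 : Δk k (Yprod w t) = ∏ B ∈ blocks t,
      ∑ π : NC B.card, Yprod (subword w B) π.1 ⊗ₜ[ℂ] Yprod (subword w B) (kreweras π.1) := by
    rw [Yprod, map_prod]
    exact Finset.prod_congr rfl fun B hB => Delta_Ygen (block_card_pos hB) _
  rw [step1, ← Finset.prod_attach (blocks t), ← Finset.univ_eq_attach, Fintype.prod_sum]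
  -- now a sum over functions
  set gf : (∀ B : ↥(blocks t), NC (B.1.card)) → (∀ B : Finset (Fin n), Setoid (Fin B.card)) :=
    fun f B => if h : B ∈ blocks t then (f ⟨B, h⟩).1 else botS B.card with hgf
  have hgfNC : ∀ f, IsNC (glue t (gf f)) := by
    intro f
    apply isNC_glue ht
    intro B hB
    rw [hgf]
    simp only [dif_pos hB]
    exact (f ⟨B, hB⟩).2
  apply Finset.sum_bij' (i := fun f _ => (⟨glue t (gf f), hgfNC f⟩ : NC n))
    (j := fun σ _ => fun B : ↥(blocks t) => (⟨restrictS σ.1 B.1, isNC_restrict σ.2 B.1⟩ : NC B.1.card))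
  · intro f _
    rw [Finset.mem_filter]
    exact ⟨Finset.mem_univ _, glue_le⟩
  · intro σ _
    exact Finset.mem_univ _
  · intro f _
    funext B
    apply Subtype.ext
    show restrictS (glue t (gf f)) B.1 = ((f B).1 : Setoid (Fin B.1.card))
    rw [restrict_glue B.2, hgf]
    simp only [dif_pos B.2]
  · intro σ hσ
    apply Subtype.ext
    show glue t _ = σ.1
    have hle : σ.1 ≤ t := (Finset.mem_filter.mp hσ).2
    rw [glue_congr (g' := fun B => restrictS σ.1 B) (fun B hB => by simp only [hgf, dif_pos hB])]
    exact glue_restrict hle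
  · intro f _
    show ∏ B : ↥(blocks t), (Yprod (subword w B.1) ((f B).1)
        ⊗ₜ[ℂ] Yprod (subword w B.1) (kreweras ((f B).1))) = _
    rw [prod_tmul]
    have hL : ∏ B : ↥(blocks t), Yprod (subword w B.1) ((f B).1)
        = Yprod w (glue t (gf f)) := by
      rw [Yprod_glue, ← Finset.prod_attach (blocks t), ← Finset.univ_eq_attach]
      apply Finset.prod_congr rfl
      intro B _
      congr 1
      rw [hgf]
      simp only [dif_pos B.2]
    have hR : ∏ B : ↥(blocks t), Yprod (subword w B.1) (kreweras ((f B).1))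
        = Yprod w (relKreweras (glue t (gf f)) t) := by
      rw [relKreweras_glue, Yprod_glue, ← Finset.prod_attach (blocks t),
        ← Finset.univ_eq_attach]
      apply Finset.prod_congr rfl
      intro B _
      congr 2
      rw [hgf]
      simp only [dif_pos B.2]
    rw [hL, hR]

end Hopf

section Conv

variable {n k : ℕ}

lemma convF_eval {ι : Type*} (s : Finset ι) (x : Yalg k) (a b : ι → Yalg k)
    (ξ η : Yalg k →ₗ[ℂ] ℂ) (hD : Δk k x = ∑ i ∈ s, a i ⊗ₜ[ℂ] b i) :
    convF (Δk k) ξ η x = ∑ i ∈ s, ξ (a i) * η (b i) := by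
  rw [convF]
  simp only [LinearMap.coe_comp, Function.comp_apply, AlgHom.toLinearMap_apply, hD,
    map_sum, TensorProduct.map_tmul, LinearMap.mul'_apply]

/-- The sum over chains of length `ℓ` from `0_n` to `ρ`. -/
noncomputable def chainSum (α : Dist k) (w : Fin n → Fin k) (ℓ : ℕ) (ρ : NC n) : ℂ :=
  ∑ c ∈ Finset.univ.filter (fun c : Fin (ℓ + 1) → NC n =>
      StrictMono c ∧ c 0 = ncBot n ∧ c (Fin.last ℓ) = ρ),
    ∏ j : Fin ℓ, cfPart α w (relKreweras ((c j.castSucc).1) ((c j.succ).1))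

lemma chainSum_zero (α : Dist k) (w : Fin n → Fin k) (ρ : NC n) :
    chainSum α w 0 ρ = if ρ = ncBot n then 1 else 0 := by
  rw [chainSum]
  have hsm : ∀ c : Fin 1 → NC n, StrictMono c := by
    intro c a b hab
    exact absurd (Subsingleton.elim a b ▸ hab) (lt_irrefl _)
  split
  · next h =>
      subst h
      have hf : Finset.univ.filter (fun c : Fin 1 → NC n =>
          StrictMono c ∧ c 0 = ncBot n ∧ c (Fin.last 0) = ncBot n)
          = {fun _ => ncBot n} := by
        ext c
        simp only [Finset.mem_filter, Finset.mem_univ, true_and, Finset.mem_singleton]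
        constructor
        · rintro ⟨_, h0, _⟩
          funext i
          rw [Subsingleton.elim i 0, h0]
        · rintro rfl
          exact ⟨hsm _, rfl, rfl⟩
      rw [hf, Finset.sum_singleton]
      simp
  · next h =>
      apply Finset.sum_eq_zero
      intro c hc
      exfalso
      rw [Finset.mem_filter] at hc
      obtain ⟨-, -, h0, hl⟩ := hc
      apply h
      rw [← hl, show (Fin.last 0) = 0 from rfl, h0]

lemma strictMono_snoc {m : ℕ} {c' : Fin (m + 1) → NC n} {ρ : NC n} (h1 : StrictMono c')
    (h2 : c' (Fin.last m) < ρ) : StrictMono (Fin.snoc c' ρ) := by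
  intro i j hij
  induction j using Fin.lastCases with
  | last =>
      obtain ⟨i', rfl⟩ := Fin.exists_castSucc_eq.mpr (ne_of_lt hij)
      rw [Fin.snoc_last, Fin.snoc_castSucc]
      exact lt_of_le_of_lt (h1.monotone (Fin.le_last i')) h2
  | cast j' =>
      obtain ⟨i', rfl⟩ := Fin.exists_castSucc_eq.mpr
        (ne_of_lt (lt_trans hij (Fin.castSucc_lt_last j')))
      rw [Fin.snoc_castSucc, Fin.snoc_castSucc]
      exact h1 (Fin.castSucc_lt_castSucc_iff.mp hij)

lemma chainSum_succ (α : Dist k) (w : Fin n → Fin k) (ℓ : ℕ) (ρ : NC n) :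
    chainSum α w (ℓ + 1) ρ = ∑ σ ∈ Finset.univ.filter (fun σ : NC n => σ < ρ),
      chainSum α w ℓ σ * cfPart α w (relKreweras σ.1 ρ.1) := by
  have hexp : ∀ σ : NC n, chainSum α w ℓ σ * cfPart α w (relKreweras σ.1 ρ.1)
      = ∑ c' ∈ Finset.univ.filter (fun c : Fin (ℓ + 1) → NC n =>
          StrictMono c ∧ c 0 = ncBot n ∧ c (Fin.last ℓ) = σ),
        (∏ j : Fin ℓ, cfPart α w (relKreweras ((c' j.castSucc).1) ((c' j.succ).1)))
          * cfPart α w (relKreweras σ.1 ρ.1) := by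
    intro σ
    rw [chainSum, Finset.sum_mul]
  rw [Finset.sum_congr rfl (fun σ _ => hexp σ), Finset.sum_sigma']
  rw [chainSum]
  refine Finset.sum_bij' (i := fun c _ =>
      (⟨c ((Fin.last ℓ).castSucc), fun j : Fin (ℓ + 1) => c j.castSucc⟩ :
        Σ _ : NC n, Fin (ℓ + 1) → NC n))
    (j := fun p _ => Fin.snoc p.2 ρ) ?hi ?hj ?li ?ri ?hw
  case hi =>
    intro c hc
    rw [Finset.mem_filter] at hc
    obtain ⟨-, hsm, h0, hl⟩ := hc
    rw [Finset.mem_sigma, Finset.mem_filter, Finset.mem_filter]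
    dsimp only
    refine ⟨⟨Finset.mem_univ _, ?_⟩, Finset.mem_univ _, hsm.comp Fin.strictMono_castSucc, ?_, rfl⟩
    · rw [← hl]; exact hsm (Fin.castSucc_lt_last _)
    · rw [Fin.castSucc_zero]; exact h0
  case hj =>
    intro p hp
    rw [Finset.mem_sigma, Finset.mem_filter, Finset.mem_filter] at hp
    obtain ⟨⟨-, hlt⟩, -, hsm, h0, hl⟩ := hp
    rw [Finset.mem_filter]
    refine ⟨Finset.mem_univ _, strictMono_snoc hsm (hl ▸ hlt), ?_, ?_⟩
    · have h2 : (Fin.snoc p.2 ρ : Fin (ℓ + 2) → NC n) (Fin.castSucc 0) = p.2 0 :=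
        Fin.snoc_castSucc _ _ _
      rw [Fin.castSucc_zero] at h2
      rw [h2]
      exact h0
    · exact Fin.snoc_last _ _
  case li =>
    intro c hc
    rw [Finset.mem_filter] at hc
    obtain ⟨-, -, -, hl⟩ := hc
    dsimp only
    funext i
    induction i using Fin.lastCases with
    | last => rw [Fin.snoc_last, hl]
    | cast i' => rw [Fin.snoc_castSucc]
  case ri =>
    intro p hp
    rw [Finset.mem_sigma, Finset.mem_filter, Finset.mem_filter] at hp
    obtain ⟨⟨-, -⟩, -, -, -, hl⟩ := hp
    refine Sigma.ext ?_ (heq_of_eq ?_)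
    · have h3 : (Fin.snoc p.2 ρ : Fin (ℓ + 2) → NC n) ((Fin.last ℓ).castSucc)
          = p.2 (Fin.last ℓ) := Fin.snoc_castSucc _ _ _
      exact h3.trans hl
    · funext j
      exact (Fin.snoc_castSucc _ _ _ :
        (Fin.snoc p.2 ρ : Fin (ℓ + 2) → NC n) j.castSucc = p.2 j)
  case hw =>
    intro c hc
    rw [Finset.mem_filter] at hc
    obtain ⟨-, -, -, hl⟩ := hc
    dsimp only
    rw [Fin.prod_univ_castSucc]
    simp only [Fin.succ_castSucc, Fin.succ_last, hl]

lemma ncBot_iff {ρ : NC n} : ρ = ncBot n ↔ ρ.1 = botS n :=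
  ⟨fun h => by rw [h]; rfl, fun h => Subtype.ext h⟩

lemma convPow_eval {α : Dist k} (hα1 : ∀ u : Fin 1 → Fin k, α ⟨1, u⟩ = 1)
    (w : Fin n → Fin k) (ℓ : ℕ) (ρ : NC n) :
    convPowF (Δk k) (εk k).toLinearMap
      ((charOf α).toLinearMap - (εk k).toLinearMap) ℓ (Yprod w ρ.1) = chainSum α w ℓ ρ := by
  induction ℓ generalizing ρ with
  | zero =>
      show εk k (Yprod w ρ.1) = _
      rw [eps_Yprod, chainSum_zero]
      by_cases h : ρ = ncBot n
      · rw [if_pos h, if_pos (ncBot_iff.mp h)]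
      · rw [if_neg h, if_neg (fun h2 => h (ncBot_iff.mpr h2))]
  | succ ℓ ih =>
      show convF (Δk k) _ _ (Yprod w ρ.1) = _
      rw [convF_eval (Finset.univ.filter (fun σ : NC n => σ.1 ≤ ρ.1)) (Yprod w ρ.1)
        (fun σ => Yprod w σ.1) (fun σ => Yprod w (relKreweras σ.1 ρ.1)) _ _
        (Delta_Yprod w ρ.1 ρ.2)]
      have hsplit : Finset.univ.filter (fun σ : NC n => σ.1 ≤ ρ.1)
          = insert ρ (Finset.univ.filter (fun σ : NC n => σ < ρ)) := by
        ext σ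
        simp only [Finset.mem_filter, Finset.mem_univ, true_and, Finset.mem_insert]
        constructor
        · intro hle
          rcases eq_or_ne σ ρ with he | he
          · exact Or.inl he
          · refine Or.inr ?_
            rw [← Subtype.coe_lt_coe]
            exact lt_of_le_of_ne hle (fun h => he (Subtype.ext h))
        · rintro (rfl | hlt)
          · exact le_rfl
          · exact le_of_lt (Subtype.coe_lt_coe.mpr hlt)
      have hnotmem : ρ ∉ Finset.univ.filter (fun σ : NC n => σ < ρ) := by
        rw [Finset.mem_filter]
        rintro ⟨-, h⟩
        exact lt_irrefl _ h
      rw [hsplit, Finset.sum_insert hnotmem]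
      have hterm : ((charOf α).toLinearMap - (εk k).toLinearMap)
          (Yprod w (relKreweras ρ.1 ρ.1)) = 0 := by
        rw [relKreweras_self, Yprod_botS, LinearMap.sub_apply, AlgHom.toLinearMap_apply,
          AlgHom.toLinearMap_apply, map_one, map_one, sub_self]
      rw [hterm, mul_zero, zero_add, chainSum_succ]
      apply Finset.sum_congr rfl
      intro σ hσ
      rw [Finset.mem_filter] at hσ
      have hne : relKreweras σ.1 ρ.1 ≠ botS n := by
        rw [Ne, relKreweras_eq_bot_iff]
        intro h
        exact absurd (Subtype.ext h) (ne_of_lt hσ.2)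
      rw [ih σ, LinearMap.sub_apply, AlgHom.toLinearMap_apply, AlgHom.toLinearMap_apply,
        charOf_Yprod hα1, eps_Yprod, if_neg hne, sub_zero]

end Conv

section Rank

variable {n k : ℕ}

/-- Map a block of `s` to the block of `t` containing it. -/
noncomputable def blockMap (t : Setoid (Fin n)) (B : Finset (Fin n)) : Finset (Fin n) :=
  if h : B.Nonempty then blockOf t (B.min' h) else ∅

lemma blockMap_blockOf {s t : Setoid (Fin n)} (hst : s ≤ t) (x : Fin n) :
    blockMap t (blockOf s x) = blockOf t x := by
  have hne : (blockOf s x).Nonempty := ⟨x, self_mem_blockOf s x⟩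
  rw [blockMap, dif_pos hne]
  exact (blockOf_eq_of_rel (hst (mem_blockOf.mp (Finset.min'_mem _ hne)))).symm

lemma blockMap_mem {s t : Setoid (Fin n)} (hst : s ≤ t) {B : Finset (Fin n)}
    (hB : B ∈ blocks s) : blockMap t B ∈ blocks t := by
  obtain ⟨x, rfl⟩ := mem_blocks.mp hB
  rw [blockMap_blockOf hst]
  exact blockOf_mem_blocks t x

lemma blockMap_surj {s t : Setoid (Fin n)} (hst : s ≤ t) :
    ∀ C ∈ blocks t, ∃ B ∈ blocks s, blockMap t B = C := by
  intro C hC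
  obtain ⟨x, rfl⟩ := mem_blocks.mp hC
  exact ⟨blockOf s x, blockOf_mem_blocks s x, blockMap_blockOf hst x⟩

lemma card_blocks_le {s t : Setoid (Fin n)} (hst : s ≤ t) :
    (blocks t).card ≤ (blocks s).card := by
  apply Finset.card_le_card_of_surjOn (blockMap t)
  intro C hC
  obtain ⟨B, hB, hBC⟩ := blockMap_surj hst C hC
  exact ⟨B, hB, hBC⟩

lemma card_blocks_lt {s t : Setoid (Fin n)} (hst : s ≤ t) (hne : s ≠ t) :
    (blocks t).card < (blocks s).card := by
  rcases lt_or_eq_of_le (card_blocks_le hst) with h | h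
  · exact h
  exfalso
  apply hne
  have hinj := Finset.inj_on_of_surj_on_of_card_le (s := blocks s) (t := blocks t)
    (fun B _ => blockMap t B) (fun B hB => blockMap_mem hst hB)
    (fun C hC => by
      obtain ⟨B, hB, hBC⟩ := blockMap_surj hst C hC
      exact ⟨B, hB, hBC⟩)
    (le_of_eq h.symm)
  apply Setoid.ext
  intro x y
  constructor
  · exact fun hr => hst hr
  · intro hr
    have hxy : blockMap t (blockOf s x) = blockMap t (blockOf s y) := by
      rw [blockMap_blockOf hst, blockMap_blockOf hst]
      exact blockOf_eq_of_rel hr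
    have hbeq : blockOf s x = blockOf s y :=
      hinj (blockOf_mem_blocks s x) (blockOf_mem_blocks s y) hxy
    have hx : x ∈ blockOf s y := hbeq ▸ self_mem_blockOf s x
    exact s.symm' (mem_blockOf.mp hx)

lemma chain_length_le (hn : 0 < n) {m : ℕ} {c : Fin (m + 2) → NC n} (hsm : StrictMono c)
    (h0 : c 0 = ncBot n) (hl : c (Fin.last (m + 1)) = ncTop n) : m + 2 ≤ n := by
  have key : ∀ v : ℕ, ∀ hv : v < m + 2,
      (blocks (c ⟨v, hv⟩).1).card + v ≤ (blocks (c 0).1).card := by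
    intro v
    induction v with
    | zero => intro hv; simp
    | succ v ih =>
        intro hv
        have hv' : v < m + 2 := Nat.lt_of_succ_lt hv
        have hlt : c ⟨v, hv'⟩ < c ⟨v + 1, hv⟩ :=
          hsm (by rw [Fin.mk_lt_mk]; exact Nat.lt_succ_self v)
        have hcard : (blocks (c ⟨v + 1, hv⟩).1).card < (blocks (c ⟨v, hv'⟩).1).card :=
          card_blocks_lt (Subtype.coe_le_coe.mpr (le_of_lt hlt))
            (fun h => absurd (Subtype.ext h) (ne_of_lt hlt))
        have := ih hv'
        omega
  have h2 := key (m + 1) (Nat.lt_succ_self _)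
  have h3 : (⟨m + 1, Nat.lt_succ_self _⟩ : Fin (m + 2)) = Fin.last (m + 1) := rfl
  rw [h3, hl, h0] at h2
  have h4 : (blocks (ncTop n).1).card = 1 := card_blocks_topS hn
  have h5 : (blocks (ncBot n).1).card = n := card_blocks_botS
  rw [h4, h5] at h2
  omega

lemma alpha_one {μ α : Dist k} (hμ : InG μ) (hα : IsRTransform μ α) :
    ∀ u : Fin 1 → Fin k, α ⟨1, u⟩ = 1 := by
  intro u
  have h := hα.2 1 u le_rfl
  rw [hμ.2 u] at h
  haveI : Unique (NC 1) := ⟨⟨ncBot 1⟩, fun π => Subtype.ext (setoid_fin_one_eq _ _)⟩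
  rw [Fintype.sum_unique] at h
  have h2 : ((default : NC 1).1 : Setoid (Fin 1)) = topS 1 := setoid_fin_one_eq _ _
  rw [h2] at h
  have h3 : cfPart α u (topS 1) = α ⟨1, u⟩ :=
    prodOver_topS (fun c v => α ⟨c, v⟩) one_pos u
  rw [h3] at h
  exact h.symm

end Rank

/-- Lemma 4.4.  For `μ ∈ G_k`, `|w| = n ≥ 2` and `ℓ = m + 1 ≥ 1`:
if `ℓ < n` then `(χ_μ - ε)^ℓ(Y_w) = ∑_{Γ chain in NC(n), |Γ| = ℓ} Cf_w^(Γ)(R_μ)`,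
and if `ℓ ≥ n` then `(χ_μ - ε)^ℓ(Y_w) = 0`. -/
theorem convolution_power_chains (k n : ℕ) (hk : 1 ≤ k) (hn : 2 ≤ n) (μ α : Dist k)
    (hμ : InG μ) (hα : IsRTransform μ α) (w : Fin n → Fin k) (m : ℕ) :
    (m + 1 < n →
      convPowF (Δk k) (εk k).toLinearMap
          ((charOf α).toLinearMap - (εk k).toLinearMap) (m + 1) (Ygen ⟨n, w⟩) =
        ∑ c ∈ Finset.univ.filter (fun c : Fin (m + 2) → NC n =>
            StrictMono c ∧ c 0 = ncBot n ∧ c (Fin.last (m + 1)) = ncTop n),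
          cfChain α w m (fun i => (c i).1)) ∧
    (n ≤ m + 1 →
      convPowF (Δk k) (εk k).toLinearMap
          ((charOf α).toLinearMap - (εk k).toLinearMap) (m + 1) (Ygen ⟨n, w⟩) = 0) := by
  have hpos : 0 < n := by omega
  have hα1 := alpha_one hμ hα
  have hY : Ygen (⟨n, w⟩ : WordIdx k) = Yprod w (ncTop n).1 := (Yprod_topS hpos w).symm
  constructor
  · intro _
    rw [hY, convPow_eval hα1 w (m + 1) (ncTop n)]
    rfl
  · intro hge
    rw [hY, convPow_eval hα1 w (m + 1) (ncTop n), chainSum]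
    apply Finset.sum_eq_zero
    intro c hc
    rw [Finset.mem_filter] at hc
    obtain ⟨-, hsm, h0, hl⟩ := hc
    exact absurd (chain_length_le hpos hsm h0 hl) (by omega)

end FreeProb

end
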